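/- Suppose x(1 − F₁(x)) is strictly concave on [0,β] and b ≥ κ̃₁ := argmax_{x∈[0,β]} x(1−F₁(x)), and F₁ ≤ F₂ pointwise. Then every post-2 mechanism (κ₁,κ₂) with b ≤ κ₁ ≤ κ₂ ≤ β has expected revenue b(1−F₁(κ₁)) + (1−b/κ₁)κ₂(1−F₂(κ₂)) at most the optimal post-1 revenue max_{x∈[0,b]} x(1 − F₁(x)) = κ̃₁(1 − F₁(κ̃₁)). -/

import Mathlib

theorem stmt9 (β b κ₁ κ₂ κt₁ : ℝ) (F₁ F₂ : ℝ → ℝ)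
    (hconc : StrictConcaveOn ℝ (Set.Icc 0 β) (fun x => x * (1 - F₁ x)))
    (hmem : κt₁ ∈ Set.Icc 0 β)
    (hmax : ∀ x ∈ Set.Icc (0 : ℝ) β, x * (1 - F₁ x) ≤ κt₁ * (1 - F₁ κt₁))
    (hFOSD : ∀ x, F₁ x ≤ F₂ x)
    (hb : 0 < b) (hbk : κt₁ ≤ b)
    (h1 : b ≤ κ₁) (h12 : κ₁ ≤ κ₂) (h2 : κ₂ ≤ β) :
    b * (1 - F₁ κ₁) + (1 - b / κ₁) * (κ₂ * (1 - F₂ κ₂)) ≤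
      κt₁ * (1 - F₁ κt₁) := by
  have hκ₁ : 0 < κ₁ := lt_of_lt_of_le hb h1
  set M := κt₁ * (1 - F₁ κt₁) with hM
  set t := b / κ₁ with ht
  have ht0 : 0 < t := div_pos hb hκ₁
  have ht1 : t ≤ 1 := (div_le_one hκ₁).2 h1
  have hA : κ₁ * (1 - F₁ κ₁) ≤ M :=
    hmax κ₁ ⟨le_of_lt hκ₁, le_trans h12 h2⟩
  have hB : κ₂ * (1 - F₂ κ₂) ≤ M := by
    have h2' : κ₂ * (1 - F₂ κ₂) ≤ κ₂ * (1 - F₁ κ₂) := by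
      have hκ₂ : 0 ≤ κ₂ := le_trans (le_of_lt hκ₁) h12
      nlinarith [hFOSD κ₂]
    exact le_trans h2' (hmax κ₂ ⟨le_trans (le_of_lt hκ₁) h12, h2⟩)
  have hbt : b * (1 - F₁ κ₁) = t * (κ₁ * (1 - F₁ κ₁)) := by
    field_simp [ht]
    rw [ht]; field_simp
  calc b * (1 - F₁ κ₁) + (1 - t) * (κ₂ * (1 - F₂ κ₂))
      = t * (κ₁ * (1 - F₁ κ₁)) + (1 - t) * (κ₂ * (1 - F₂ κ₂)) := by rw [hbt]
    _ ≤ t * M + (1 - t) * M := by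
        have := mul_le_mul_of_nonneg_left hA (le_of_lt ht0)
        have := mul_le_mul_of_nonneg_left hB (by linarith : (0:ℝ) ≤ 1 - t)
        linarith
    _ = M := by ring
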